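/- For all real x and all real y with |y| = M > 0, we have |tan(π(x+iy))|² ≤ (1 - 1/cosh(2πM))^{-2}. Moreover, if M > 1/π then |tan(π(x+iy))|² ≤ 4. -/

import Mathlib

open Real Complex

lemma tan_sq_eq (a b : ℝ) :
    ‖Complex.tan ((a : ℂ) + (b : ℂ) * Complex.I)‖ ^ 2
      = (Real.sin a ^ 2 + Real.sinh b ^ 2) / (Real.cos a ^ 2 + Real.sinh b ^ 2) := by
  have h1 : Real.cosh b ^ 2 = Real.sinh b ^ 2 + 1 := Real.cosh_sq b
  have h2 : Real.sin a ^ 2 + Real.cos a ^ 2 = 1 := Real.sin_sq_add_cos_sq a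
  have hsin : ‖Complex.sin ((a : ℂ) + (b : ℂ) * Complex.I)‖ ^ 2
      = Real.sin a ^ 2 + Real.sinh b ^ 2 := by
    have h : Complex.sin ((a : ℂ) + (b : ℂ) * Complex.I)
        = ((Real.sin a * Real.cosh b : ℝ) : ℂ) + ((Real.cos a * Real.sinh b : ℝ) : ℂ) * Complex.I := by
      rw [Complex.sin_eq]
      simp only [Complex.add_re, Complex.ofReal_re, Complex.mul_re, Complex.I_re,
        Complex.I_im, Complex.ofReal_im, Complex.add_im, Complex.mul_im]
      push_cast
      ring
    rw [h, Complex.sq_norm, Complex.normSq_add_mul_I]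
    nlinarith
  have hcos : ‖Complex.cos ((a : ℂ) + (b : ℂ) * Complex.I)‖ ^ 2
      = Real.cos a ^ 2 + Real.sinh b ^ 2 := by
    have h : Complex.cos ((a : ℂ) + (b : ℂ) * Complex.I)
        = ((Real.cos a * Real.cosh b : ℝ) : ℂ) + ((-(Real.sin a * Real.sinh b) : ℝ) : ℂ) * Complex.I := by
      rw [Complex.cos_eq]
      simp only [Complex.add_re, Complex.ofReal_re, Complex.mul_re, Complex.I_re,
        Complex.I_im, Complex.ofReal_im, Complex.add_im, Complex.mul_im]
      push_cast
      ring
    rw [h, Complex.sq_norm, Complex.normSq_add_mul_I]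
    nlinarith
  rw [Complex.tan_eq_sin_div_cos, norm_div, div_pow, hsin, hcos]

theorem tan_sq_bound_large_imaginary_part
    (x y M : ℝ) (hM : 0 < M) (hy : |y| = M) :
    ‖Complex.tan ((Real.pi : ℂ) * (x + y * Complex.I))‖ ^ 2
        ≤ ((1 - 1 / Real.cosh (2 * Real.pi * M)) ^ 2)⁻¹ ∧
      (1 / Real.pi < M →
        ‖Complex.tan ((Real.pi : ℂ) * (x + y * Complex.I))‖ ^ 2
          ≤ 4) := by
  have hz : (Real.pi : ℂ) * (x + y * Complex.I)
      = ((Real.pi * x : ℝ) : ℂ) + ((Real.pi * y : ℝ) : ℂ) * Complex.I := by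
    push_cast; ring
  rw [hz, tan_sq_eq]
  set a := Real.pi * x
  set s := Real.sinh (Real.pi * M) ^ 2 with hs
  have hsy : Real.sinh (Real.pi * y) ^ 2 = s := by
    rcases abs_cases y with ⟨h, _⟩ | ⟨h, _⟩
    · rw [hy] at h; rw [← h]
    · have hne : y = -M := by rw [hy] at h; linarith
      rw [hne]
      simp [Real.sinh_neg, mul_neg]
      exact hs.symm
  rw [hsy]
  have hspos : 0 < s := by
    have : 0 < Real.sinh (Real.pi * M) :=
      Real.sinh_pos_iff.2 (mul_pos Real.pi_pos hM)
    positivity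
  have hcosh : Real.cosh (2 * Real.pi * M) = 1 + 2 * s := by
    have h2m : 2 * Real.pi * M = 2 * (Real.pi * M) := by ring
    rw [h2m, Real.cosh_two_mul, Real.cosh_sq]; ring
  have hsin2 : Real.sin a ^ 2 ≤ 1 := Real.sin_sq_le_one a
  have hcos2 : 0 ≤ Real.cos a ^ 2 := sq_nonneg _
  have hratio : (Real.sin a ^ 2 + s) / (Real.cos a ^ 2 + s) ≤ (1 + s) / s := by
    rw [div_le_div_iff₀ (by positivity) hspos]
    nlinarith
  have hrhs : ((1 - 1 / Real.cosh (2 * Real.pi * M)) ^ 2)⁻¹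
      = (1 + 2 * s) ^ 2 / (2 * s) ^ 2 := by
    rw [hcosh]
    have h1 : (0:ℝ) < 1 + 2 * s := by linarith
    rw [one_sub_div (ne_of_gt h1)]
    field_simp
    ring
  have hmain : (Real.sin a ^ 2 + s) / (Real.cos a ^ 2 + s)
      ≤ ((1 - 1 / Real.cosh (2 * Real.pi * M)) ^ 2)⁻¹ := by
    rw [hrhs]
    refine hratio.trans ?_
    rw [div_le_div_iff₀ hspos (by positivity)]
    nlinarith
  refine ⟨hmain, fun hMpi => hmain.trans ?_⟩
  have h2 : (2:ℝ) < 2 * Real.pi * M := by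
    have := (div_lt_iff₀ Real.pi_pos).mp (by rwa [one_div] at hMpi)
    nlinarith [Real.pi_pos]
  have hexp2 : (4:ℝ) ≤ Real.exp 2 := by
    have h := Real.exp_one_gt_d9
    have he : Real.exp 2 = Real.exp 1 * Real.exp 1 := by
      rw [← Real.exp_add]; norm_num
    nlinarith
  have hc2 : (2:ℝ) ≤ Real.cosh (2 * Real.pi * M) := by
    have hmono : Real.cosh 2 ≤ Real.cosh (2 * Real.pi * M) := by
      rw [Real.cosh_le_cosh, abs_of_pos (by norm_num : (0:ℝ) < 2),
        abs_of_pos (by linarith)]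
      linarith
    refine le_trans ?_ hmono
    rw [Real.cosh_eq]
    nlinarith [Real.exp_pos (-2:ℝ)]
  have hcpos : (0:ℝ) < Real.cosh (2 * Real.pi * M) := Real.cosh_pos _
  have hhalf : (1:ℝ)/2 ≤ 1 - 1 / Real.cosh (2 * Real.pi * M) := by
    have : 1 / Real.cosh (2 * Real.pi * M) ≤ 1/2 := by
      rw [div_le_div_iff₀ hcpos (by norm_num)]; linarith
    linarith
  rw [inv_le_comm₀ (by positivity) (by norm_num)]
  nlinarith
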